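/- For every integer n ≥ 1, the total number of unordered partitions of [n] = {1,…,n} into nonempty lists (over all possible numbers of blocks k) equals ∑_{l=0}^{n} c(n,l) · B_l, where c(n,l) is the unsigned Stirling number of the first kind and B_l is the l-th Bell number; equivalently, ∑_{k=1}^{n} (n!/k!) · C(n−1,k−1) = ∑_{l=0}^{n} c(n,l) · B_l. -/

import Mathlib

open Finset

/-- The number of cycles (including fixed points) of a permutation of `Fin n`. -/
noncomputable def cycleCount {n : ℕ} (σ : Equiv.Perm (Fin n)) : ℕ :=
  σ.cycleType.card + (Finset.univ.filter fun x => σ x = x).card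

/-- The unsigned Stirling number of the first kind `c(n,k)`: the number of
permutations of an `n`-element set with exactly `k` cycles. -/
noncomputable def stirlingFirst (n k : ℕ) : ℕ :=
  Set.ncard {σ : Equiv.Perm (Fin n) | cycleCount σ = k}

/-- The signed Stirling number of the first kind `s(n,k) = (-1)^(n-k) c(n,k)`. -/
noncomputable def stirlingFirstSigned (n k : ℕ) : ℤ :=
  (-1) ^ (n - k) * (stirlingFirst n k : ℤ)

/-- `P` is an (unordered) partition of `Fin n` into nonempty blocks. -/
def IsPartitionOf (n : ℕ) (P : Finset (Finset (Fin n))) : Prop :=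
  (∀ b ∈ P, b.Nonempty) ∧ (∀ b ∈ P, ∀ c ∈ P, b ≠ c → Disjoint b c) ∧
    ∀ x : Fin n, ∃ b ∈ P, x ∈ b

/-- The Stirling number of the second kind `S(n,k)`: the number of partitions of an
`n`-element set into exactly `k` nonempty blocks. -/
noncomputable def stirlingSecond (n k : ℕ) : ℕ :=
  Set.ncard {P : Finset (Finset (Fin n)) | IsPartitionOf n P ∧ P.card = k}

/-- The Bell number `B n`: the number of partitions of an `n`-element set into
nonempty blocks. -/
noncomputable def bell (n : ℕ) : ℕ :=
  Set.ncard {P : Finset (Finset (Fin n)) | IsPartitionOf n P}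

/-- The statistic `nse` of a list: the number of positions `j` such that some later
entry is smaller than the entry at position `j`. -/
def nseList {α : Type*} [LinearOrder α] : List α → ℕ
  | [] => 0
  | a :: w => (if ∃ b ∈ w, b < a then 1 else 0) + nseList w

/-- `B` is an ordered set partition ("list of sets") of `Fin n` into `k` pairwise
disjoint nonempty blocks. -/
def IsOrderedSetPartition (n k : ℕ) (B : Fin k → Finset (Fin n)) : Prop :=
  (∀ j, (B j).Nonempty) ∧ (∀ j l, j ≠ l → Disjoint (B j) (B l)) ∧
    ∀ x : Fin n, ∃ j, x ∈ B j

/-- The statistic `nsb` of an ordered set partition: the number of indices `j`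
such that `min (B j) > min (B l)` for some `l > j`. -/
def nsbOSP {n k : ℕ} (B : Fin k → Finset (Fin n)) : ℕ :=
  (Finset.univ.filter fun j : Fin k => ∃ l, j < l ∧ (B l).min < (B j).min).card

/-- `P` is a "set of lists" partition of `Fin n`: an unordered collection of nonempty
sequences of distinct elements, with pairwise disjoint underlying sets covering `Fin n`. -/
def IsSetOfLists (n : ℕ) (P : Finset (List (Fin n))) : Prop :=
  (∀ w ∈ P, w ≠ []) ∧ (∀ w ∈ P, w.Nodup) ∧
    (∀ w ∈ P, ∀ u ∈ P, w ≠ u → ∀ x ∈ w, x ∉ u) ∧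
    ∀ x : Fin n, ∃ w ∈ P, x ∈ w

/-- The statistic `nse` of a set of lists: the sum of `nseList` over its blocks. -/
def nseSL {n : ℕ} (P : Finset (List (Fin n))) : ℕ := ∑ w ∈ P, nseList w

/-- `L` is a "list of lists" partition of `Fin n` into `k` blocks: a sequence of `k`
nonempty sequences of distinct elements, with pairwise disjoint underlying sets
covering `Fin n`. -/
def IsListOfLists (n k : ℕ) (L : Fin k → List (Fin n)) : Prop :=
  (∀ j, L j ≠ []) ∧ (∀ j, (L j).Nodup) ∧
    (∀ j l, j ≠ l → ∀ x ∈ L j, x ∉ L l) ∧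
    ∀ x : Fin n, ∃ j, x ∈ L j

/-- The statistic `nse` of a list of lists: the sum of `nseList` over its blocks. -/
def nseLL {n k : ℕ} (L : Fin k → List (Fin n)) : ℕ := ∑ j, nseList (L j)

/-- The statistic `nsb` of a list of lists: the number of indices `j` such that
`min (L j) > min (L l)` for some `l > j`. -/
def nsbLL {n k : ℕ} (L : Fin k → List (Fin n)) : ℕ :=
  (Finset.univ.filter fun j : Fin k => ∃ l, j < l ∧ (L l).minimum < (L j).minimum).card


lemma ncard_setOf_eq_natCard {α : Type*} (p : α → Prop) :
    Set.ncard {x | p x} = Nat.card {x // p x} := (Nat.card_coe_set_eq _).symm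

lemma natCard_fiber_sum {α : Type*} {β : Type*} [Fintype β] (π : α → β)
    (h : ∀ b : β, Finite {a // π a = b}) :
    Nat.card α = ∑ b : β, Nat.card {a // π a = b} := by
  classical
  have : Finite α := Finite.of_equiv _ (Equiv.sigmaFiberEquiv π)
  haveI : ∀ b, Fintype {a // π a = b} := fun b => Fintype.ofFinite _
  haveI : Fintype α := Fintype.ofFinite α
  rw [Nat.card_eq_fintype_card, ← Fintype.card_congr (Equiv.sigmaFiberEquiv π),
    Fintype.card_sigma]
  simp [Nat.card_eq_fintype_card]


def FullL (n : ℕ) (u : Finset (Fin n)) := {w : List (Fin n) // w.Nodup ∧ w.toFinset = u}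

lemma FullL.length_eq {n : ℕ} {u : Finset (Fin n)} (w : FullL n u) : w.1.length = u.card := by
  have h := List.toFinset_card_of_nodup w.2.1
  rw [w.2.2] at h
  exact h.symm

lemma FullL.get_mem_u {n : ℕ} {u : Finset (Fin n)} (w : FullL n u) (i : Fin w.1.length) :
    w.1.get i ∈ u := by
  have h : w.1.get i ∈ w.1.toFinset := List.mem_toFinset.mpr (w.1.get_mem _)
  rwa [w.2.2] at h

noncomputable def fullLEquiv {n : ℕ} (u : Finset (Fin n)) :
    FullL n u ≃ (Fin u.card ≃ {x : Fin n // x ∈ u}) where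
  toFun w :=
    Equiv.ofBijective (fun i => (⟨w.1.get (Fin.cast w.length_eq.symm i), w.get_mem_u _⟩ :
        {x : Fin n // x ∈ u}))
      (by
        refine (Fintype.bijective_iff_injective_and_card _).mpr ⟨?_, by simp⟩
        intro i j hij
        have := List.nodup_iff_injective_get.mp w.2.1 (congrArg Subtype.val hij)
        simpa [Fin.ext_iff] using congrArg Fin.val this)
  invFun e := ⟨List.ofFn (fun i => (e i).1), by
      refine ⟨List.nodup_ofFn.mpr ?_, ?_⟩
      · intro i j hij
        exact e.injective (Subtype.ext hij)
      · ext y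
        simp only [List.mem_toFinset, List.mem_ofFn, Set.mem_range]
        constructor
        · rintro ⟨i, rfl⟩; exact (e i).2
        · intro hy; obtain ⟨i, hi⟩ := e.surjective ⟨y, hy⟩
          exact ⟨i, congrArg Subtype.val hi⟩⟩
  left_inv w := by
    apply Subtype.ext
    apply List.ext_get
    · simpa using w.length_eq.symm
    · intro i h1 h2
      simp [Equiv.ofBijective]
  right_inv e := by
    apply Equiv.ext
    intro i
    apply Subtype.ext
    simp [Equiv.ofBijective, List.get_ofFn]

instance {n : ℕ} (u : Finset (Fin n)) : Finite (FullL n u) :=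
  Finite.of_equiv _ (fullLEquiv u).symm

lemma natCard_fullL {n : ℕ} (u : Finset (Fin n)) :
    Nat.card (FullL n u) = (u.card).factorial := by
  rw [Nat.card_congr (fullLEquiv u), Nat.card_eq_fintype_card,
    Fintype.card_equiv u.equivFin.symm]
  simp


def chop {α : Type*} : List ℕ → List α → List (List α)
  | [], _ => []
  | c :: cs, w => w.take c :: chop cs (w.drop c)

@[simp] lemma chop_length {α : Type*} (cs : List ℕ) (w : List α) :
    (chop cs w).length = cs.length := by
  induction cs generalizing w with
  | nil => rfl
  | cons c cs ih => simp [chop, ih]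

lemma chop_map_length_join {α : Type*} (L : List (List α)) :
    chop (L.map List.length) L.flatten = L := by
  induction L with
  | nil => rfl
  | cons l L ih => simp [chop, List.take_left, List.drop_left, ih]

lemma join_chop {α : Type*} (cs : List ℕ) (w : List α) (h : w.length ≤ cs.sum) :
    (chop cs w).flatten = w := by
  induction cs generalizing w with
  | nil =>
    simp only [List.sum_nil, Nat.le_zero, List.length_eq_zero_iff] at h
    simp [chop, h]
  | cons c cs ih =>
    simp only [chop, List.flatten_cons]
    rw [ih (w.drop c) (by simp only [List.length_drop, List.sum_cons] at h ⊢; omega),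
      List.take_append_drop]

lemma map_length_chop {α : Type*} (cs : List ℕ) (w : List α) (h : cs.sum ≤ w.length) :
    (chop cs w).map List.length = cs := by
  induction cs generalizing w with
  | nil => rfl
  | cons c cs ih =>
    simp only [List.sum_cons] at h
    simp only [chop, List.map_cons]
    rw [List.length_take, min_eq_left (by omega),
      ih (w.drop c) (by simp only [List.length_drop]; omega)]


def PosComp (k n : ℕ) := {c : Fin k → ℕ // (∀ j, c j ≠ 0) ∧ ∑ j, c j = n}

noncomputable def posCompEquiv (k n : ℕ) (hk : k ≤ n) :
    PosComp k n ≃ {d : Fin k → ℕ // ∑ j, d j = n - k} where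
  toFun c := ⟨fun j => c.1 j - 1, by
    obtain ⟨c, hpos, hsum⟩ := c
    show ∑ j, (c j - 1) = n - k
    have h1 : ∑ j, (c j - 1 + 1) = n := by
      rw [← hsum]; exact Finset.sum_congr rfl fun j _ => by have := hpos j; omega
    rw [Finset.sum_add_distrib, Finset.sum_const, card_univ, Fintype.card_fin, smul_eq_mul,
      mul_one] at h1
    omega⟩
  invFun d := ⟨fun j => d.1 j + 1, fun j => Nat.succ_ne_zero _, by
    show ∑ j, (d.1 j + 1) = n
    rw [Finset.sum_add_distrib, d.2, Finset.sum_const, card_univ, Fintype.card_fin, smul_eq_mul,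
      mul_one]
    omega⟩
  left_inv c := by
    apply Subtype.ext; funext j
    have := c.2.1 j
    show c.1 j - 1 + 1 = c.1 j
    omega
  right_inv d := by
    apply Subtype.ext; funext j
    show d.1 j + 1 - 1 = d.1 j
    omega

noncomputable def funMultisetEquiv (k : ℕ) : (Fin k → ℕ) ≃ Multiset (Fin k) :=
  Finsupp.equivFunOnFinite.symm.trans
    ⟨Finsupp.toMultiset, Multiset.toFinsupp, Finsupp.toMultiset_toFinsupp,
      Multiset.toFinsupp_toMultiset⟩

noncomputable def sumFixedEquivSym (k m : ℕ) :
    {d : Fin k → ℕ // ∑ j, d j = m} ≃ Sym (Fin k) m :=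
  Equiv.subtypeEquiv (funMultisetEquiv k)
    (by
      intro d
      simp only [funMultisetEquiv, Equiv.trans_apply, Equiv.coe_fn_mk]
      rw [Finsupp.card_toMultiset, Finsupp.sum_fintype]
      · simp [Finsupp.equivFunOnFinite]; rfl
      · intro; rfl)

lemma natCard_posComp (k n : ℕ) (hk1 : 1 ≤ k) (hkn : k ≤ n) :
    Nat.card (PosComp k n) = (n - 1).choose (k - 1) := by
  rw [Nat.card_congr ((posCompEquiv k n hkn).trans (sumFixedEquivSym k (n - k))),
    Nat.card_eq_fintype_card, Sym.card_sym_eq_multichoose, Nat.multichoose_eq,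
    Fintype.card_fin]
  have h1 : k + (n - k) - 1 = n - 1 := by omega
  have h2 : n - k = (n - 1) - (k - 1) := by omega
  rw [h1, h2, Nat.choose_symm (by omega)]

section Blocks
variable {n : ℕ} {U : Finset (Finset (Fin n))}

lemma IsPartitionOf.existsUnique (hU : IsPartitionOf n U) (x : Fin n) :
    ∃! u, u ∈ U ∧ x ∈ u := by
  obtain ⟨u, hu, hx⟩ := hU.2.2 x
  refine ⟨u, ⟨hu, hx⟩, ?_⟩
  rintro v ⟨hv, hxv⟩
  by_contra hne
  exact (Finset.disjoint_left.mp (hU.2.1 v hv u hu hne) hxv) hx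

noncomputable def blk (hU : IsPartitionOf n U) (x : Fin n) : Finset (Fin n) :=
  U.choose (x ∈ ·) (by
    obtain ⟨u, ⟨h1, h2⟩, h3⟩ := hU.existsUnique x
    exact ⟨u, ⟨h1, h2⟩, fun v hv => h3 v ⟨hv.1, hv.2⟩⟩)

lemma blk_mem (hU : IsPartitionOf n U) (x : Fin n) : blk hU x ∈ U :=
  Finset.choose_mem _ _ _

lemma mem_blk (hU : IsPartitionOf n U) (x : Fin n) : x ∈ blk hU x :=
  Finset.choose_property (x ∈ ·) _ _

lemma blk_eq (hU : IsPartitionOf n U) {x : Fin n} {u : Finset (Fin n)}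
    (hu : u ∈ U) (hx : x ∈ u) : blk hU x = u :=
  ((hU.existsUnique x).unique ⟨blk_mem hU x, mem_blk hU x⟩ ⟨hu, hx⟩)

/-- The sigma type of blocks is equivalent to `Fin n`. -/
noncomputable def blkSigmaEquiv (hU : IsPartitionOf n U) :
    (Σ u : {u // u ∈ U}, {x : Fin n // x ∈ u.1}) ≃ Fin n where
  toFun p := p.2.1
  invFun x := ⟨⟨blk hU x, blk_mem hU x⟩, ⟨x, mem_blk hU x⟩⟩
  left_inv p := by
    obtain ⟨⟨u, hu⟩, ⟨x, hx⟩⟩ := p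
    have h : blk hU x = u := blk_eq hU hu hx
    refine Sigma.ext (Subtype.ext h) ((Subtype.heq_iff_coe_eq ?_).mpr rfl)
    intro y
    show y ∈ blk hU x ↔ y ∈ u
    rw [h]
  right_inv x := rfl

lemma g_congr {n : ℕ} {U : Finset (Finset (Fin n))}
    (g : (u : {u // u ∈ U}) → Equiv.Perm {x : Fin n // x ∈ u.1})
    {u v : {u // u ∈ U}} (h : u = v) (x : Fin n) (hx : x ∈ u.1) (hx' : x ∈ v.1) :
    ((g u ⟨x, hx⟩ : {x : Fin n // x ∈ u.1}) : Fin n) = (g v ⟨x, hx'⟩ : Fin n) := by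
  subst h; rfl

noncomputable def invPermEquiv (hU : IsPartitionOf n U) :
    {σ : Equiv.Perm (Fin n) // ∀ u ∈ U, ∀ x ∈ u, σ x ∈ u} ≃
      ((u : {u // u ∈ U}) → Equiv.Perm {x : Fin n // x ∈ u.1}) where
  toFun σ u := σ.1.subtypePerm (fun x => by
    refine Iff.symm ⟨?_, ?_⟩
    · exact fun hx => σ.2 u.1 u.2 x hx
    · intro hx
      have h1 : σ.1 x ∈ blk hU x := σ.2 _ (blk_mem hU x) x (mem_blk hU x)
      have h2 : blk hU (σ.1 x) = u.1 := blk_eq hU u.2 hx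
      have h3 : blk hU (σ.1 x) = blk hU x := blk_eq hU (blk_mem hU x) h1
      rw [← h2, h3]
      exact mem_blk hU x)
  invFun g := ⟨(blkSigmaEquiv hU).permCongr (Equiv.sigmaCongrRight g), by
    intro u hu x hx
    have h : blk hU x = u := blk_eq hU hu hx
    show (blkSigmaEquiv hU) ((Equiv.sigmaCongrRight g) ((blkSigmaEquiv hU).symm x)) ∈ u
    simp only [blkSigmaEquiv, Equiv.coe_fn_mk, Equiv.coe_fn_symm_mk, Equiv.sigmaCongrRight_apply]
    rw [← h]
    exact (g ⟨blk hU x, blk_mem hU x⟩ ⟨x, mem_blk hU x⟩).2⟩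
  left_inv σ := by
    apply Subtype.ext
    apply Equiv.ext
    intro x
    show (blkSigmaEquiv hU) _ = σ.1 x
    simp only [blkSigmaEquiv, Equiv.permCongr_apply, Equiv.coe_fn_mk, Equiv.coe_fn_symm_mk,
      Equiv.sigmaCongrRight_apply]
    rfl
  right_inv g := by
    funext u
    apply Equiv.ext
    intro x
    apply Subtype.ext
    show ((blkSigmaEquiv hU).permCongr (Equiv.sigmaCongrRight g) x.1 : Fin n) = (g u x : Fin n)
    simp only [Equiv.permCongr_apply, blkSigmaEquiv, Equiv.coe_fn_mk, Equiv.coe_fn_symm_mk,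
      Equiv.sigmaCongrRight_apply]
    obtain ⟨u, hu⟩ := u
    obtain ⟨x, hx⟩ := x
    have h : blk hU x = u := blk_eq hU hu hx
    have he : (⟨blk hU x, blk_mem hU x⟩ : {u // u ∈ U}) = ⟨u, hu⟩ := Subtype.ext h
    exact g_congr g he x (mem_blk hU x) hx

lemma natCard_invPerm (hU : IsPartitionOf n U) :
    Nat.card {σ : Equiv.Perm (Fin n) // ∀ u ∈ U, ∀ x ∈ u, σ x ∈ u} =
      ∏ u ∈ U, (u.card).factorial := by
  rw [Nat.card_congr (invPermEquiv hU), Nat.card_pi]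
  rw [← Finset.prod_coe_sort U (fun u => (u.card).factorial)]
  congr 1
  funext u
  rw [Nat.card_eq_fintype_card, Fintype.card_perm, Fintype.card_coe]

end Blocks

section Orbits
open Equiv Equiv.Perm
variable {n : ℕ} (σ : Equiv.Perm (Fin n))

def orbit (x : Fin n) : Finset (Fin n) := (σ.cycleOf x).support ∪ {x}

variable {σ}

lemma sameCycle_iff_eq_of_fixed {x y : Fin n} (h : σ x = x) : σ.SameCycle x y ↔ y = x := by
  constructor
  · rintro ⟨i, rfl⟩
    exact (σ.zpow_apply_eq_self_of_apply_eq_self h i)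
  · rintro rfl; exact Equiv.Perm.SameCycle.refl _ _

lemma mem_orbit_iff {x y : Fin n} : y ∈ orbit σ x ↔ σ.SameCycle x y := by
  unfold orbit
  rcases eq_or_ne (σ x) x with h | h
  · rw [sameCycle_iff_eq_of_fixed h]
    have : (σ.cycleOf x).support = ∅ := by
      rw [Equiv.Perm.support_cycleOf_eq_nil_iff.mpr]
      simpa using h
    simp [this]
  · simp only [Finset.mem_union, Finset.mem_singleton, Equiv.Perm.mem_support_cycleOf_iff]
    constructor
    · rintro (⟨h1, _⟩ | rfl)
      · exact h1
      · exact Equiv.Perm.SameCycle.refl _ _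
    · intro h1
      exact Or.inl ⟨h1, Equiv.Perm.mem_support.mpr h⟩

lemma mem_orbit_self (x : Fin n) : x ∈ orbit σ x :=
  mem_orbit_iff.mpr (Equiv.Perm.SameCycle.refl _ _)

lemma orbit_eq_iff {x y : Fin n} : orbit σ x = orbit σ y ↔ σ.SameCycle x y := by
  constructor
  · intro h
    have := mem_orbit_self (σ := σ) y
    rw [← h, mem_orbit_iff] at this
    exact this
  · intro h
    ext z
    rw [mem_orbit_iff, mem_orbit_iff]
    exact ⟨fun hz => (h.symm).trans hz, fun hz => h.trans hz⟩

lemma orbit_apply (x : Fin n) : orbit σ (σ x) = orbit σ x :=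
  orbit_eq_iff.mpr (Equiv.Perm.sameCycle_apply_right.mpr (Equiv.Perm.SameCycle.refl _ _)).symm

lemma orbit_closed {x y : Fin n} (h : y ∈ orbit σ x) : σ y ∈ orbit σ x := by
  rw [mem_orbit_iff] at h ⊢
  exact h.trans (Equiv.Perm.sameCycle_apply_right.mpr (Equiv.Perm.SameCycle.refl _ _))

/-- a σ-closed set is saturated under SameCycle -/
lemma closed_saturated {b : Finset (Fin n)} (hb : ∀ x ∈ b, σ x ∈ b) {x y : Fin n}
    (hx : x ∈ b) (h : σ.SameCycle x y) : y ∈ b := by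
  obtain ⟨i, -, rfl⟩ := h.exists_pow_eq'
  clear * - hb hx
  induction i generalizing x with
  | zero => simpa using hx
  | succ m ih =>
    have h : (σ ^ (m + 1)) x = (σ ^ m) (σ x) := by
      rw [pow_succ, Equiv.Perm.mul_apply]
    rw [h]
    exact ih (hb x hx)

variable (σ)

def orbSet : Finset (Finset (Fin n)) := Finset.univ.image (orbit σ)

lemma card_orbSet : (orbSet σ).card = cycleCount σ := by
  classical
  have horb : orbSet σ =
      ((Finset.univ.filter fun x => σ x = x).image fun x => ({x} : Finset (Fin n))) ∪
        (σ.cycleFactorsFinset.image fun c => c.support) := by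
    ext s
    simp only [orbSet, Finset.mem_union, Finset.mem_image, Finset.mem_filter, Finset.mem_univ,
      true_and]
    constructor
    · rintro ⟨x, -, rfl⟩
      rcases eq_or_ne (σ x) x with h | h
      · left
        refine ⟨x, h, ?_⟩
        unfold orbit
        rw [Equiv.Perm.support_cycleOf_eq_nil_iff.mpr (by simpa using h)]
        simp
      · right
        refine ⟨σ.cycleOf x, Equiv.Perm.cycleOf_mem_cycleFactorsFinset_iff.mpr
          (Equiv.Perm.mem_support.mpr h), ?_⟩
        unfold orbit
        rw [Finset.union_eq_left.mpr]
        simp only [Finset.singleton_subset_iff]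
        rw [Equiv.Perm.mem_support_cycleOf_iff]
        exact ⟨Equiv.Perm.SameCycle.refl _ _, Equiv.Perm.mem_support.mpr h⟩
    · rintro (⟨x, hx, rfl⟩ | ⟨c, hc, rfl⟩)
      · refine ⟨x, ?_⟩
        unfold orbit
        rw [Equiv.Perm.support_cycleOf_eq_nil_iff.mpr (by simpa using hx)]
        simp
      · obtain ⟨x, hx⟩ := (Equiv.Perm.mem_cycleFactorsFinset_iff.mp hc).1.nonempty_support
        have hcx : c = σ.cycleOf x := Equiv.Perm.cycle_is_cycleOf hx hc
        have hxs : σ x ≠ x := by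
          have h1 := (Equiv.Perm.mem_cycleFactorsFinset_iff.mp hc).2 x hx
          have h2 := Equiv.Perm.mem_support.mp hx
          rw [h1] at h2
          exact h2
        refine ⟨x, ?_⟩
        unfold orbit
        rw [← hcx, Finset.union_eq_left.mpr (by simpa using hx)]
  rw [horb, Finset.card_union_of_disjoint, cycleCount]
  · have h1 : ((Finset.univ.filter fun x => σ x = x).image
        fun x => ({x} : Finset (Fin n))).card = (Finset.univ.filter fun x => σ x = x).card :=
      Finset.card_image_of_injective _ Finset.singleton_injective
    have h2 : (σ.cycleFactorsFinset.image fun c => c.support).card = σ.cycleType.card := by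
      rw [Finset.card_image_of_injOn, Equiv.Perm.cycleType]
      · simp
      · intro c hc d hd hcd
        obtain ⟨x, hx⟩ := (Equiv.Perm.mem_cycleFactorsFinset_iff.mp hc).1.nonempty_support
        have hcd' : c.support = d.support := hcd
        have hx2 : x ∈ d.support := hcd' ▸ hx
        rw [Equiv.Perm.cycle_is_cycleOf hx hc, Equiv.Perm.cycle_is_cycleOf hx2 hd]

    omega
  · rw [Finset.disjoint_left]
    rintro s hs hs'
    simp only [Finset.mem_image, Finset.mem_filter, Finset.mem_univ, true_and] at hs hs'
    obtain ⟨x, hx, rfl⟩ := hs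
    obtain ⟨c, hc, hcs⟩ := hs'
    have hxc : x ∈ c.support := by rw [hcs]; exact Finset.mem_singleton_self x
    have h1 := (Equiv.Perm.mem_cycleFactorsFinset_iff.mp hc).2 x hxc
    have h2 := Equiv.Perm.mem_support.mp hxc
    rw [h1] at h2
    exact h2 hx

end Orbits

section SatPart
variable {n : ℕ} (σ : Equiv.Perm (Fin n))

lemma orbit_mem_orbSet (x : Fin n) : orbit σ x ∈ orbSet σ := by
  simp only [orbSet, Finset.mem_image, Finset.mem_univ, true_and]
  exact ⟨x, rfl⟩

noncomputable def omap (x : Fin n) : Fin (cycleCount σ) :=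
  Fin.cast (card_orbSet σ) ((orbSet σ).equivFin ⟨orbit σ x, orbit_mem_orbSet σ x⟩)

variable {σ}

lemma omap_eq_iff {x y : Fin n} : omap σ x = omap σ y ↔ σ.SameCycle x y := by
  rw [← orbit_eq_iff]
  unfold omap
  constructor
  · intro h
    have h2 := (orbSet σ).equivFin.injective ((Fin.cast_injective _) h)
    exact congrArg Subtype.val h2
  · intro h
    have : (⟨orbit σ x, orbit_mem_orbSet σ x⟩ : {s // s ∈ orbSet σ}) =
        ⟨orbit σ y, orbit_mem_orbSet σ y⟩ := Subtype.ext h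
    rw [this]

lemma omap_surj (r : Fin (cycleCount σ)) : ∃ x, omap σ x = r := by
  set t := (orbSet σ).equivFin.symm (Fin.cast (card_orbSet σ).symm r) with ht
  obtain ⟨x, hx⟩ : ∃ x, orbit σ x = t.1 := by
    have h2 := t.2
    simp only [orbSet, Finset.mem_image, Finset.mem_univ, true_and] at h2
    exact h2
  refine ⟨x, ?_⟩
  unfold omap
  have h1 : (⟨orbit σ x, orbit_mem_orbSet σ x⟩ : {s // s ∈ orbSet σ}) = t := Subtype.ext hx
  rw [h1, ht, Equiv.apply_symm_apply]
  simp
lemma omap_apply (x : Fin n) : omap σ (σ x) = omap σ x := by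
  unfold omap
  congr 1
  apply congrArg
  exact Subtype.ext (orbit_apply x)

variable {U : Finset (Finset (Fin n))}

lemma preimage_image_omap (hU : IsPartitionOf n U) (hinv : ∀ u ∈ U, ∀ x ∈ u, σ x ∈ u)
    {b : Finset (Fin n)} (hb : b ∈ U) :
    Finset.univ.filter (fun x => omap σ x ∈ b.image (omap σ)) = b := by
  ext x
  simp only [Finset.mem_filter, Finset.mem_univ, true_and, Finset.mem_image]
  constructor
  · rintro ⟨y, hy, hxy⟩
    exact closed_saturated (hinv b hb) hy (omap_eq_iff.mp hxy)
  · intro hx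
    exact ⟨x, hx, rfl⟩

lemma image_preimage_omap (r : Finset (Fin (cycleCount σ))) :
    (Finset.univ.filter (fun x => omap σ x ∈ r)).image (omap σ) = r := by
  ext z
  simp only [Finset.mem_image, Finset.mem_filter, Finset.mem_univ, true_and]
  constructor
  · rintro ⟨x, hx, rfl⟩
    exact hx
  · intro hz
    obtain ⟨x, rfl⟩ := omap_surj z
    exact ⟨x, hz, rfl⟩

noncomputable def satPartEquiv (σ : Equiv.Perm (Fin n)) :
    {U : Finset (Finset (Fin n)) // IsPartitionOf n U ∧ ∀ u ∈ U, ∀ x ∈ u, σ x ∈ u} ≃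
      {R : Finset (Finset (Fin (cycleCount σ))) // IsPartitionOf (cycleCount σ) R} where
  toFun U := ⟨U.1.image (fun b => b.image (omap σ)), by
    obtain ⟨⟨hne, hdis, hcov⟩, hinv⟩ := U.2
    refine ⟨?_, ?_, ?_⟩
    · rintro b' hb'
      obtain ⟨b, hb, rfl⟩ := Finset.mem_image.mp hb'
      exact (hne b hb).image _
    · rintro b' hb' c' hc' hne'
      obtain ⟨b, hb, rfl⟩ := Finset.mem_image.mp hb'
      obtain ⟨c, hc, rfl⟩ := Finset.mem_image.mp hc'
      rw [Finset.disjoint_left]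
      rintro z hz1 hz2
      obtain ⟨x, hx, rfl⟩ := Finset.mem_image.mp hz1
      obtain ⟨y, hy, hyx⟩ := Finset.mem_image.mp hz2
      have hbc : b = c := by
        by_contra hne2
        have hyb : y ∈ b := closed_saturated (hinv b hb) hx (omap_eq_iff.mp hyx).symm
        exact (Finset.disjoint_left.mp (hdis b hb c hc hne2) hyb) hy
      exact hne' (by rw [hbc])
    · intro r
      obtain ⟨x, rfl⟩ := omap_surj r
      obtain ⟨b, hb, hxb⟩ := hcov x
      exact ⟨b.image (omap σ), Finset.mem_image_of_mem _ hb, Finset.mem_image_of_mem _ hxb⟩⟩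
  invFun R := ⟨R.1.image (fun r => Finset.univ.filter (fun x => omap σ x ∈ r)), by
    obtain ⟨hne, hdis, hcov⟩ := R.2
    refine ⟨⟨?_, ?_, ?_⟩, ?_⟩
    · rintro p hp
      obtain ⟨r, hr, rfl⟩ := Finset.mem_image.mp hp
      obtain ⟨z, hz⟩ := hne r hr
      obtain ⟨x, rfl⟩ := omap_surj z
      exact ⟨x, by simp [hz]⟩
    · rintro p hp q hq hne'
      obtain ⟨r, hr, rfl⟩ := Finset.mem_image.mp hp
      obtain ⟨s, hs, rfl⟩ := Finset.mem_image.mp hq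
      rw [Finset.disjoint_left]
      rintro x hx1 hx2
      simp only [Finset.mem_filter, Finset.mem_univ, true_and] at hx1 hx2
      have hrs : r = s := by
        by_contra hne2
        exact (Finset.disjoint_left.mp (hdis r hr s hs hne2) hx1) hx2
      exact hne' (by rw [hrs])
    · intro x
      obtain ⟨r, hr, hxr⟩ := hcov (omap σ x)
      exact ⟨_, Finset.mem_image_of_mem _ hr, by simp [hxr]⟩
    · rintro p hp x hx
      obtain ⟨r, hr, rfl⟩ := Finset.mem_image.mp hp
      simp only [Finset.mem_filter, Finset.mem_univ, true_and] at hx ⊢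
      rw [omap_apply]
      exact hx⟩
  left_inv U := by
    apply Subtype.ext
    show (U.1.image _).image _ = U.1
    rw [Finset.image_image]
    have : ∀ b ∈ U.1, (Finset.univ.filter (fun x => omap σ x ∈ b.image (omap σ))) = b :=
      fun b hb => preimage_image_omap U.2.1 U.2.2 hb
    calc U.1.image (fun b => Finset.univ.filter (fun x => omap σ x ∈ b.image (omap σ)))
        = U.1.image id := Finset.image_congr (fun b hb => this b hb)
      _ = U.1 := Finset.image_id
  right_inv R := by
    apply Subtype.ext
    show (R.1.image _).image _ = R.1
    rw [Finset.image_image]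
    calc R.1.image (fun r => (Finset.univ.filter (fun x => omap σ x ∈ r)).image (omap σ))
        = R.1.image id := Finset.image_congr (fun r _ => image_preimage_omap r)
      _ = R.1 := Finset.image_id

lemma ncard_setOf_eq_natCard' {α : Type*} (p : α → Prop) :
    Set.ncard {x | p x} = Nat.card {x // p x} := (Nat.card_coe_set_eq _).symm

lemma natCard_satPart (σ : Equiv.Perm (Fin n)) :
    Nat.card {U : Finset (Finset (Fin n)) //
        IsPartitionOf n U ∧ ∀ u ∈ U, ∀ x ∈ u, σ x ∈ u} = bell (cycleCount σ) := by
  rw [Nat.card_congr (satPartEquiv σ), bell, ncard_setOf_eq_natCard']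

lemma part_card_le {n : ℕ} {U : Finset (Finset (Fin n))} (h1 : ∀ b ∈ U, b.Nonempty)
    (h2 : ∀ b ∈ U, ∀ c ∈ U, b ≠ c → Disjoint b c) : U.card ≤ n := by
  classical
  calc U.card = ∑ _b ∈ U, 1 := by simp
    _ ≤ ∑ b ∈ U, b.card := Finset.sum_le_sum (fun b hb => Finset.card_pos.mpr (h1 b hb))
    _ = (U.biUnion id).card := (Finset.card_biUnion h2).symm
    _ ≤ (Finset.univ : Finset (Fin n)).card := Finset.card_le_card (Finset.subset_univ _)
    _ = n := by simp

lemma cycleCount_le (σ : Equiv.Perm (Fin n)) : cycleCount σ ≤ n := by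
  rw [← card_orbSet σ]
  apply part_card_le
  · rintro b hb
    simp only [orbSet, Finset.mem_image, Finset.mem_univ, true_and] at hb
    obtain ⟨x, rfl⟩ := hb
    exact ⟨x, mem_orbit_self x⟩
  · rintro b hb c hc hbc
    simp only [orbSet, Finset.mem_image, Finset.mem_univ, true_and] at hb hc
    obtain ⟨x, rfl⟩ := hb
    obtain ⟨y, rfl⟩ := hc
    rw [Finset.disjoint_left]
    rintro z hz1 hz2
    rw [mem_orbit_iff] at hz1 hz2
    exact hbc (orbit_eq_iff.mpr (hz1.trans hz2.symm))

lemma part_card_mem_Icc {n : ℕ} (hn : 1 ≤ n) {U : Finset (Finset (Fin n))}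
    (hU : IsPartitionOf n U) : U.card ∈ Finset.Icc 1 n := by
  rw [Finset.mem_Icc]
  constructor
  · obtain ⟨b, hb, -⟩ := hU.2.2 ⟨0, hn⟩
    exact Finset.card_pos.mpr ⟨b, hb⟩
  · exact part_card_le hU.1 hU.2.1

end SatPart

section SoL
variable {n : ℕ}

lemma sol_image_part {P : Finset (List (Fin n))} (hP : IsSetOfLists n P) :
    IsPartitionOf n (P.image List.toFinset) := by
  obtain ⟨hne, hnd, hdis, hcov⟩ := hP
  refine ⟨?_, ?_, ?_⟩
  · rintro b hb
    obtain ⟨w, hw, rfl⟩ := Finset.mem_image.mp hb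
    obtain ⟨a, ha⟩ := List.exists_mem_of_ne_nil w (hne w hw)
    exact ⟨a, List.mem_toFinset.mpr ha⟩
  · rintro b hb c hc hbc
    obtain ⟨w, hw, rfl⟩ := Finset.mem_image.mp hb
    obtain ⟨v, hv, rfl⟩ := Finset.mem_image.mp hc
    have hwv : w ≠ v := fun h => hbc (by rw [h])
    rw [Finset.disjoint_left]
    intro x hx1 hx2
    exact hdis w hw v hv hwv x (List.mem_toFinset.mp hx1) (List.mem_toFinset.mp hx2)
  · intro x
    obtain ⟨w, hw, hx⟩ := hcov x
    exact ⟨w.toFinset, Finset.mem_image_of_mem _ hw, List.mem_toFinset.mpr hx⟩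

lemma sol_existsUnique {P : Finset (List (Fin n))} (hP : IsSetOfLists n P)
    {u : Finset (Fin n)} (hu : u ∈ P.image List.toFinset) :
    ∃! w, w ∈ P ∧ w.toFinset = u := by
  obtain ⟨w, hw, hwu⟩ := Finset.mem_image.mp hu
  refine ⟨w, ⟨hw, hwu⟩, ?_⟩
  rintro v ⟨hv, hvu⟩
  by_contra hne
  obtain ⟨a, ha⟩ := List.exists_mem_of_ne_nil v (hP.1 v hv)
  have ha2 : a ∈ w := by
    have h1 : a ∈ v.toFinset := List.mem_toFinset.mpr ha
    rw [hvu, ← hwu] at h1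
    exact List.mem_toFinset.mp h1
  exact hP.2.2.1 v hv w hw hne a ha ha2

variable {U : Finset (Finset (Fin n))}

def solGlue (g : (u : {u // u ∈ U}) → FullL n u.1) : Finset (List (Fin n)) :=
  U.attach.image (fun u => (g u).1)

lemma solGlue_isSoL (hU : IsPartitionOf n U) (g : (u : {u // u ∈ U}) → FullL n u.1) :
    IsSetOfLists n (solGlue g) := by
  refine ⟨?_, ?_, ?_, ?_⟩
  · rintro w hw
    obtain ⟨u, -, rfl⟩ := Finset.mem_image.mp hw
    intro h
    obtain ⟨a, ha⟩ := hU.1 u.1 u.2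
    have h2 := (g u).2.2
    rw [h] at h2
    rw [← h2] at ha
    simp at ha
  · rintro w hw
    obtain ⟨u, -, rfl⟩ := Finset.mem_image.mp hw
    exact (g u).2.1
  · rintro w hw v hv hwv x hxw hxv
    obtain ⟨u, -, rfl⟩ := Finset.mem_image.mp hw
    obtain ⟨u', -, rfl⟩ := Finset.mem_image.mp hv
    have huu : u ≠ u' := fun h => hwv (by rw [h])
    have h1 : x ∈ u.1 := by rw [← (g u).2.2]; exact List.mem_toFinset.mpr hxw
    have h2 : x ∈ u'.1 := by rw [← (g u').2.2]; exact List.mem_toFinset.mpr hxv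
    have hd := hU.2.1 u.1 u.2 u'.1 u'.2 (fun h => huu (Subtype.ext h))
    exact (Finset.disjoint_left.mp hd h1) h2
  · intro x
    obtain ⟨u, hu, hx⟩ := hU.2.2 x
    refine ⟨(g ⟨u, hu⟩).1, Finset.mem_image_of_mem _ (Finset.mem_attach _ _), ?_⟩
    rw [← List.mem_toFinset, (g ⟨u, hu⟩).2.2]
    exact hx

lemma solGlue_image (g : (u : {u // u ∈ U}) → FullL n u.1) :
    (solGlue g).image List.toFinset = U := by
  unfold solGlue
  rw [Finset.image_image]
  calc U.attach.image (fun u => (g u).1.toFinset)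
      = U.attach.image (fun u => u.1) := Finset.image_congr (fun u _ => (g u).2.2)
    _ = U := Finset.attach_image_val

lemma sol_mem_image_of_himg {P : Finset (List (Fin n))}
    (himg : P.image List.toFinset = U) {u : Finset (Fin n)} (hu : u ∈ U) :
    u ∈ P.image List.toFinset := by rw [himg]; exact hu

noncomputable def solPick
    (x : {P : Finset (List (Fin n)) // IsSetOfLists n P ∧ Finset.image List.toFinset P = U})
    (u : {u // u ∈ U}) : FullL n u.1 :=
  ⟨(x.1.choose (fun w => w.toFinset = u.1) (by
      obtain ⟨w, ⟨hw1, hw2⟩, hw3⟩ := sol_existsUnique x.2.1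
        (sol_mem_image_of_himg x.2.2 u.2)
      exact ⟨w, ⟨hw1, hw2⟩, fun v hv => hw3 v ⟨hv.1, hv.2⟩⟩)),
    x.2.1.2.1 _ (Finset.choose_mem (fun w : List (Fin n) => w.toFinset = u.1) x.1 _),
    Finset.choose_property (fun w : List (Fin n) => w.toFinset = u.1) x.1 _⟩

lemma solPick_mem
    (x : {P : Finset (List (Fin n)) // IsSetOfLists n P ∧ Finset.image List.toFinset P = U})
    (u : {u // u ∈ U}) : (solPick x u).1 ∈ x.1 := by
  unfold solPick
  exact Finset.choose_mem (fun w : List (Fin n) => w.toFinset = u.1) x.1 _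

noncomputable def solFiberEquiv (hU : IsPartitionOf n U) :
    {P : Finset (List (Fin n)) // IsSetOfLists n P ∧ Finset.image List.toFinset P = U} ≃
      ((u : {u // u ∈ U}) → FullL n u.1) where
  toFun x := solPick x
  invFun g := ⟨solGlue g, solGlue_isSoL hU g, solGlue_image g⟩
  left_inv x := by
    apply Subtype.ext
    ext w
    simp only [solGlue, Finset.mem_image]
    constructor
    · rintro ⟨u, -, rfl⟩
      exact solPick_mem x u
    · intro hw
      have hu : w.toFinset ∈ U := by rw [← x.2.2]; exact Finset.mem_image_of_mem _ hw
      refine ⟨⟨w.toFinset, hu⟩, Finset.mem_attach _ _, ?_⟩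
      have huniq := sol_existsUnique x.2.1 (sol_mem_image_of_himg x.2.2 hu)
      exact huniq.unique ⟨solPick_mem x ⟨w.toFinset, hu⟩, (solPick x ⟨w.toFinset, hu⟩).2.2⟩
        ⟨hw, rfl⟩
  right_inv g := by
    funext u
    apply Subtype.ext
    set y : {P : Finset (List (Fin n)) // IsSetOfLists n P ∧ Finset.image List.toFinset P = U} :=
      ⟨solGlue g, solGlue_isSoL hU g, solGlue_image g⟩ with hy
    have hmem : (g u).1 ∈ y.1 := Finset.mem_image_of_mem _ (Finset.mem_attach _ _)
    have huniq := sol_existsUnique y.2.1 (sol_mem_image_of_himg y.2.2 u.2)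
    exact huniq.unique ⟨solPick_mem y u, (solPick y u).2.2⟩ ⟨hmem, (g u).2.2⟩

lemma natCard_solFiber (hU : IsPartitionOf n U) :
    Nat.card {P : Finset (List (Fin n)) // IsSetOfLists n P ∧
        Finset.image List.toFinset P = U} = ∏ u ∈ U, (u.card).factorial := by
  rw [Nat.card_congr (solFiberEquiv hU), Nat.card_pi,
    ← Finset.prod_coe_sort U (fun u => (u.card).factorial)]
  exact Finset.prod_congr rfl (fun u _ => natCard_fullL u.1)

lemma solFiber_isEmpty (hU : ¬ IsPartitionOf n U) :
    IsEmpty {P : Finset (List (Fin n)) // IsSetOfLists n P ∧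
        Finset.image List.toFinset P = U} := by
  constructor
  rintro ⟨P, hP, himg⟩
  exact hU (himg ▸ sol_image_part hP)

instance solFiber_finite (U : Finset (Finset (Fin n))) :
    Finite {P : Finset (List (Fin n)) // IsSetOfLists n P ∧
        Finset.image List.toFinset P = U} := by
  by_cases hU : IsPartitionOf n U
  · exact Finite.of_equiv _ (solFiberEquiv hU).symm
  · exact @Finite.of_fintype _ (@Fintype.ofIsEmpty _ (solFiber_isEmpty hU))

end SoL

section OLL
variable {n k : ℕ}

def OLLP (n k : ℕ) (f : Fin k → List (Fin n)) : Prop :=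
  (∀ j, f j ≠ []) ∧ (∀ j, (f j).Nodup) ∧ (∀ j l, j ≠ l → ∀ x ∈ f j, x ∉ f l) ∧
    ∀ x : Fin n, ∃ j, x ∈ f j

lemma oll_inj {f : Fin k → List (Fin n)} (hf : OLLP n k f) :
    Function.Injective (fun j => (f j).toFinset) := by
  intro j l hjl
  have hjl' : (f j).toFinset = (f l).toFinset := hjl
  by_contra hne
  obtain ⟨a, ha⟩ := List.exists_mem_of_ne_nil (f j) (hf.1 j)
  have ha2 : a ∈ f l := by
    have h1 : a ∈ (f j).toFinset := List.mem_toFinset.mpr ha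
    rw [hjl'] at h1
    exact List.mem_toFinset.mp h1
  exact hf.2.2.1 j l hne a ha ha2

lemma oll_image_part {f : Fin k → List (Fin n)} (hf : OLLP n k f) :
    IsPartitionOf n (Finset.univ.image (fun j => (f j).toFinset)) := by
  refine ⟨?_, ?_, ?_⟩
  · rintro b hb
    obtain ⟨j, -, rfl⟩ := Finset.mem_image.mp hb
    obtain ⟨a, ha⟩ := List.exists_mem_of_ne_nil (f j) (hf.1 j)
    exact ⟨a, List.mem_toFinset.mpr ha⟩
  · rintro b hb c hc hbc
    obtain ⟨j, -, rfl⟩ := Finset.mem_image.mp hb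
    obtain ⟨l, -, rfl⟩ := Finset.mem_image.mp hc
    have hjl : j ≠ l := fun h => hbc (by rw [h])
    rw [Finset.disjoint_left]
    intro a h1 h2
    exact hf.2.2.1 j l hjl a (List.mem_toFinset.mp h1) (List.mem_toFinset.mp h2)
  · intro x
    obtain ⟨j, hj⟩ := hf.2.2.2 x
    exact ⟨(f j).toFinset, Finset.mem_image_of_mem _ (Finset.mem_univ j),
      List.mem_toFinset.mpr hj⟩

lemma oll_image_card {f : Fin k → List (Fin n)} (hf : OLLP n k f) :
    (Finset.univ.image (fun j => (f j).toFinset)).card = k := by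
  rw [Finset.card_image_of_injective _ (oll_inj hf)]
  simp

variable {U : Finset (Finset (Fin n))}

lemma oll_mem_of_image_eq {f : Fin k → List (Fin n)}
    (h : Finset.univ.image (fun j => (f j).toFinset) = U) (j : Fin k) :
    (f j).toFinset ∈ U := by
  rw [← h]
  exact Finset.mem_image_of_mem _ (Finset.mem_univ j)

noncomputable def ollE (hk : U.card = k)
    (x : {f : Fin k → List (Fin n) // OLLP n k f ∧
      Finset.univ.image (fun j => (f j).toFinset) = U}) : Fin k ≃ {u // u ∈ U} :=
  Equiv.ofBijective (fun j => (⟨(x.1 j).toFinset, oll_mem_of_image_eq x.2.2 j⟩ : {u // u ∈ U}))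
    (by
      refine (Fintype.bijective_iff_injective_and_card _).mpr ⟨?_, ?_⟩
      · intro j l h
        exact oll_inj x.2.1 (congrArg Subtype.val h)
      · rw [Fintype.card_coe, hk, Fintype.card_fin])

lemma ollE_val (hk : U.card = k)
    (x : {f : Fin k → List (Fin n) // OLLP n k f ∧
      Finset.univ.image (fun j => (f j).toFinset) = U}) (j : Fin k) :
    (ollE hk x j).1 = (x.1 j).toFinset := rfl

def ollGlue (e : Fin k ≃ {u // u ∈ U}) (g : (u : {u // u ∈ U}) → FullL n u.1) :
    Fin k → List (Fin n) := fun j => (g (e j)).1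

lemma ollGlue_ollp (hU : IsPartitionOf n U) (e : Fin k ≃ {u // u ∈ U})
    (g : (u : {u // u ∈ U}) → FullL n u.1) : OLLP n k (ollGlue e g) := by
  refine ⟨?_, ?_, ?_, ?_⟩
  · intro j h
    obtain ⟨a, ha⟩ := hU.1 _ (e j).2
    have h2 := (g (e j)).2.2
    rw [show (g (e j)).1 = ollGlue e g j from rfl, h] at h2
    rw [← h2] at ha
    simp at ha
  · exact fun j => (g (e j)).2.1
  · intro j l hjl x hxj hxl
    have h1 : x ∈ (e j).1 := by
      rw [← (g (e j)).2.2]; exact List.mem_toFinset.mpr hxj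
    have h2 : x ∈ (e l).1 := by
      rw [← (g (e l)).2.2]; exact List.mem_toFinset.mpr hxl
    have hne : (e j).1 ≠ (e l).1 := fun h => hjl (e.injective (Subtype.ext h))
    exact (Finset.disjoint_left.mp (hU.2.1 _ (e j).2 _ (e l).2 hne) h1) h2
  · intro x
    obtain ⟨u, hu, hx⟩ := hU.2.2 x
    refine ⟨e.symm ⟨u, hu⟩, ?_⟩
    rw [← List.mem_toFinset]
    unfold ollGlue
    rw [(g (e (e.symm ⟨u, hu⟩))).2.2, Equiv.apply_symm_apply]
    exact hx

lemma ollGlue_image (e : Fin k ≃ {u // u ∈ U}) (g : (u : {u // u ∈ U}) → FullL n u.1) :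
    Finset.univ.image (fun j => ((ollGlue e g) j).toFinset) = U := by
  ext u
  simp only [Finset.mem_image, Finset.mem_univ, true_and]
  constructor
  · rintro ⟨j, rfl⟩
    rw [show (ollGlue e g j).toFinset = (e j).1 from (g (e j)).2.2]
    exact (e j).2
  · intro hu
    refine ⟨e.symm ⟨u, hu⟩, ?_⟩
    unfold ollGlue
    rw [(g (e (e.symm ⟨u, hu⟩))).2.2, Equiv.apply_symm_apply]

noncomputable def ollFiberEquiv (hU : IsPartitionOf n U) (hk : U.card = k) :
    {f : Fin k → List (Fin n) // OLLP n k f ∧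
        Finset.univ.image (fun j => (f j).toFinset) = U} ≃
      (Fin k ≃ {u // u ∈ U}) × ((u : {u // u ∈ U}) → FullL n u.1) where
  toFun x := ⟨ollE hk x, fun u => ⟨x.1 ((ollE hk x).symm u), x.2.1.2.1 _, by
    have h := congrArg Subtype.val ((ollE hk x).apply_symm_apply u)
    rw [ollE_val] at h
    exact h⟩⟩
  invFun eg := ⟨ollGlue eg.1 eg.2, ollGlue_ollp hU eg.1 eg.2, ollGlue_image eg.1 eg.2⟩
  left_inv x := by
    apply Subtype.ext
    funext j
    show (x.1 ((ollE hk x).symm (ollE hk x j))) = x.1 j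
    rw [Equiv.symm_apply_apply]
  right_inv eg := by
    obtain ⟨e, g⟩ := eg
    set y : {f : Fin k → List (Fin n) // OLLP n k f ∧
        Finset.univ.image (fun j => (f j).toFinset) = U} :=
      ⟨ollGlue e g, ollGlue_ollp hU e g, ollGlue_image e g⟩ with hy
    have he : ollE hk y = e := by
      apply Equiv.ext
      intro j
      apply Subtype.ext
      rw [ollE_val]
      exact (g (e j)).2.2
    refine Prod.ext he ?_
    funext u
    apply Subtype.ext
    show y.1 ((ollE hk y).symm u) = (g u).1
    have h2 : (ollE hk y).symm u = e.symm u := by rw [he]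
    rw [h2]
    show (g (e (e.symm u))).1 = (g u).1
    rw [Equiv.apply_symm_apply]

end OLL

section OLLJoin
variable {n k : ℕ}

lemma fullL_univ_length (w : FullL n (Finset.univ : Finset (Fin n))) : w.1.length = n := by
  rw [FullL.length_eq w]
  simp

def pieces (c : Fin k → ℕ) (w : List (Fin n)) : List (List (Fin n)) := chop (List.ofFn c) w

lemma pieces_length (c : Fin k → ℕ) (w : List (Fin n)) : (pieces c w).length = k := by
  simp [pieces]

def splitFun (c : Fin k → ℕ) (w : List (Fin n)) : Fin k → List (Fin n) :=
  fun j => (pieces c w)[(j : ℕ)]'(by rw [pieces_length]; exact j.isLt)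

lemma ofFn_splitFun (c : Fin k → ℕ) (w : List (Fin n)) :
    List.ofFn (splitFun c w) = pieces c w := by
  apply List.ext_getElem
  · simp [pieces_length]
  · intro i h1 h2
    simp [splitFun]

lemma flatten_nodup_of_ollp {f : Fin k → List (Fin n)} (hf : OLLP n k f) :
    (List.ofFn f).flatten.Nodup := by
  rw [List.nodup_flatten]
  constructor
  · intro l hl
    obtain ⟨j, rfl⟩ := List.mem_ofFn.mp hl
    exact hf.2.1 j
  · rw [List.pairwise_ofFn]
    intro i j hij
    exact fun a hai haj => hf.2.2.1 i j (Fin.ne_of_lt hij) a hai haj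

lemma flatten_toFinset_of_ollp {f : Fin k → List (Fin n)} (hf : OLLP n k f) :
    (List.ofFn f).flatten.toFinset = Finset.univ := by
  ext a
  simp only [List.mem_toFinset, List.mem_flatten, Finset.mem_univ, iff_true]
  obtain ⟨j, hj⟩ := hf.2.2.2 a
  exact ⟨f j, List.mem_ofFn.mpr ⟨j, rfl⟩, hj⟩

lemma flatten_length_of_ollp {f : Fin k → List (Fin n)} (hf : OLLP n k f) :
    (List.ofFn f).flatten.length = n := by
  rw [← List.toFinset_card_of_nodup (flatten_nodup_of_ollp hf), flatten_toFinset_of_ollp hf]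
  simp

section SplitLemmas
variable {c : Fin k → ℕ} {w : List (Fin n)}

lemma splitFun_flatten (hsum : (List.ofFn c).sum = w.length) : (List.ofFn (splitFun c w)).flatten = w := by
  rw [ofFn_splitFun]
  exact join_chop _ _ (le_of_eq hsum.symm)

lemma splitFun_length (hsum : (List.ofFn c).sum = w.length) (j : Fin k) : (splitFun c w j).length = c j := by
  have hmap : (pieces c w).map List.length = List.ofFn c :=
    map_length_chop _ _ (le_of_eq hsum)
  have h1 : (splitFun c w j).length =
      ((pieces c w).map List.length)[(j : ℕ)]'(by simp [pieces_length]) := by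
    rw [List.getElem_map]
    rfl
  rw [h1, List.getElem_of_eq hmap, List.getElem_ofFn]

lemma splitFun_ollp (hsum : (List.ofFn c).sum = w.length) (hw : w.Nodup) (hwu : w.toFinset = Finset.univ)
    (hc : ∀ j, c j ≠ 0) : OLLP n k (splitFun c w) := by
  have hflat := splitFun_flatten (c := c) (w := w) hsum
  have hfnodup : (List.ofFn (splitFun c w)).flatten.Nodup := by rw [hflat]; exact hw
  refine ⟨?_, ?_, ?_, ?_⟩
  · intro j h
    have := splitFun_length (c := c) (w := w) hsum j
    rw [h] at this
    exact hc j this.symm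
  · intro j
    have hmem : splitFun c w j ∈ List.ofFn (splitFun c w) :=
      List.mem_ofFn.mpr ⟨j, rfl⟩
    exact ((List.sublist_flatten_of_mem hmem).nodup hfnodup)
  · have hpw := (List.nodup_flatten.mp hfnodup).2
    rw [List.pairwise_iff_getElem] at hpw
    intro j l hjl x hxj hxl
    rcases lt_or_gt_of_ne hjl with h | h
    · have hd := hpw (j : ℕ) (l : ℕ) (by simp [j.isLt]) (by simp [l.isLt]) h
      simp only [List.getElem_ofFn, Fin.eta] at hd
      exact hd hxj hxl
    · have hd := hpw (l : ℕ) (j : ℕ) (by simp [l.isLt]) (by simp [j.isLt]) h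
      simp only [List.getElem_ofFn, Fin.eta] at hd
      exact hd hxl hxj
  · intro x
    have hx : x ∈ (List.ofFn (splitFun c w)).flatten := by
      rw [hflat, ← List.mem_toFinset, hwu]
      exact Finset.mem_univ x
    rw [List.mem_flatten] at hx
    obtain ⟨l, hl, hxl⟩ := hx
    obtain ⟨j, rfl⟩ := List.mem_ofFn.mp hl
    exact ⟨j, hxl⟩

end SplitLemmas

noncomputable def ollJoinEquiv (n k : ℕ) :
    {f : Fin k → List (Fin n) // OLLP n k f} ≃
      FullL n (Finset.univ : Finset (Fin n)) × PosComp k n where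
  toFun x := ⟨⟨(List.ofFn x.1).flatten, flatten_nodup_of_ollp x.2, flatten_toFinset_of_ollp x.2⟩,
    ⟨fun j => (x.1 j).length, fun j => by
      simpa [List.length_eq_zero_iff] using x.2.1 j, by
      show ∑ j, (x.1 j).length = n
      have h1 := flatten_length_of_ollp x.2
      rw [List.length_flatten, List.map_ofFn, List.sum_ofFn] at h1
      exact h1⟩⟩
  invFun wc := ⟨splitFun wc.2.1 wc.1.1, by
    apply splitFun_ollp _ wc.1.2.1 wc.1.2.2 wc.2.2.1
    rw [List.sum_ofFn, fullL_univ_length, wc.2.2.2]⟩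
  left_inv x := by
    apply Subtype.ext
    have hp : pieces (fun j => (x.1 j).length) (List.ofFn x.1).flatten = List.ofFn x.1 := by
      unfold pieces
      have h2 : List.ofFn (fun j => (x.1 j).length) = (List.ofFn x.1).map List.length := by
        rw [List.map_ofFn]
        rfl
      rw [h2, chop_map_length_join]
    funext j
    show (pieces (fun j => (x.1 j).length) (List.ofFn x.1).flatten)[(j : ℕ)]'_ = x.1 j
    rw [List.getElem_of_eq hp, List.getElem_ofFn]
  right_inv wc := by
    have hsum : (List.ofFn wc.2.1).sum = wc.1.1.length := by
      rw [List.sum_ofFn, fullL_univ_length, wc.2.2.2]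
    refine Prod.ext ?_ ?_
    · apply Subtype.ext
      show (List.ofFn (splitFun wc.2.1 wc.1.1)).flatten = wc.1.1
      exact splitFun_flatten hsum
    · apply Subtype.ext
      funext j
      show (splitFun wc.2.1 wc.1.1 j).length = wc.2.1 j
      exact splitFun_length hsum j

end OLLJoin

section Assembly
open Finset
open scoped Classical

lemma natCard_prod_fst_sum {α β : Type*} [Fintype α] [Finite β] (Q : α → β → Prop) :
    Nat.card {p : α × β // Q p.1 p.2} = ∑ a : α, Nat.card {b : β // Q a b} := by
  classical
  have hfib : ∀ a : α, {x : {p : α × β // Q p.1 p.2} // x.1.1 = a} ≃ {b : β // Q a b} := by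
    intro a
    exact {
      toFun := fun x => ⟨x.1.1.2, by have h := x.1.2; rw [x.2] at h; exact h⟩
      invFun := fun b => ⟨⟨(a, b.1), b.2⟩, rfl⟩
      left_inv := fun x => by
        apply Subtype.ext
        apply Subtype.ext
        exact Prod.ext x.2.symm rfl
      right_inv := fun b => rfl }
  rw [natCard_fiber_sum (fun x : {p : α × β // Q p.1 p.2} => x.1.1)
    (fun a => Finite.of_equiv _ (hfib a).symm)]
  exact Finset.sum_congr rfl (fun a _ => Nat.card_congr (hfib a))

lemma natCard_prod_snd_sum {α β : Type*} [Finite α] [Fintype β] (Q : α → β → Prop) :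
    Nat.card {p : α × β // Q p.1 p.2} = ∑ b : β, Nat.card {a : α // Q a b} := by
  have h : {p : α × β // Q p.1 p.2} ≃ {p : β × α // Q p.2 p.1} := {
    toFun := fun x => ⟨⟨x.1.2, x.1.1⟩, x.2⟩
    invFun := fun x => ⟨⟨x.1.2, x.1.1⟩, x.2⟩
    left_inv := fun x => rfl
    right_inv := fun x => rfl }
  rw [Nat.card_congr h, natCard_prod_fst_sum (fun (b : β) (a : α) => Q a b)]

variable {n : ℕ}

/-- weight of a partition -/
noncomputable def Wgt (U : Finset (Finset (Fin n))) : ℕ := ∏ u ∈ U, (u.card).factorial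

lemma natCard_pairFiber (U : Finset (Finset (Fin n))) :
    Nat.card {σ : Equiv.Perm (Fin n) //
        IsPartitionOf n U ∧ ∀ u ∈ U, ∀ x ∈ u, σ x ∈ u} =
      if IsPartitionOf n U then Wgt U else 0 := by
  by_cases hU : IsPartitionOf n U
  · rw [if_pos hU]
    unfold Wgt
    rw [← natCard_invPerm hU]
    exact Nat.card_congr (Equiv.subtypeEquivRight (fun σ => and_iff_right hU))
  · rw [if_neg hU]
    have : IsEmpty {σ : Equiv.Perm (Fin n) //
        IsPartitionOf n U ∧ ∀ u ∈ U, ∀ x ∈ u, σ x ∈ u} :=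
      ⟨fun x => hU x.2.1⟩
    exact Nat.card_of_isEmpty

lemma natCard_solFiber' (U : Finset (Finset (Fin n))) :
    Nat.card {P : Finset (List (Fin n)) // IsSetOfLists n P ∧
        Finset.image List.toFinset P = U} =
      if IsPartitionOf n U then Wgt U else 0 := by
  by_cases hU : IsPartitionOf n U
  · rw [if_pos hU]
    unfold Wgt
    exact natCard_solFiber hU
  · rw [if_neg hU]
    have := solFiber_isEmpty (n := n) (U := U) hU
    exact Nat.card_of_isEmpty

/-- Total count of set-of-lists equals total count of (perm, invariant partition) pairs. -/
lemma sol_total_eq_pairs :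
    Nat.card {P : Finset (List (Fin n)) // IsSetOfLists n P} =
      Nat.card {p : Equiv.Perm (Fin n) × Finset (Finset (Fin n)) //
        IsPartitionOf n p.2 ∧ ∀ u ∈ p.2, ∀ x ∈ u, p.1 x ∈ u} := by
  classical
  have hfib : ∀ U : Finset (Finset (Fin n)),
      {x : {P : Finset (List (Fin n)) // IsSetOfLists n P} //
          Finset.image List.toFinset x.1 = U} ≃
        {P : Finset (List (Fin n)) // IsSetOfLists n P ∧ Finset.image List.toFinset P = U} :=
    fun U => Equiv.subtypeSubtypeEquivSubtypeInter
      (fun P : Finset (List (Fin n)) => IsSetOfLists n P)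
      (fun P => Finset.image List.toFinset P = U)
  rw [natCard_fiber_sum (fun x : {P : Finset (List (Fin n)) // IsSetOfLists n P} =>
      Finset.image List.toFinset x.1) (fun U => Finite.of_equiv _ (hfib U).symm)]
  rw [natCard_prod_snd_sum (fun (σ : Equiv.Perm (Fin n)) (U : Finset (Finset (Fin n))) =>
      IsPartitionOf n U ∧ ∀ u ∈ U, ∀ x ∈ u, σ x ∈ u)]
  refine Finset.sum_congr rfl (fun U _ => ?_)
  rw [Nat.card_congr (hfib U), natCard_solFiber' U, natCard_pairFiber U]

lemma pairs_eq_stirling_bell :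
    Nat.card {p : Equiv.Perm (Fin n) × Finset (Finset (Fin n)) //
        IsPartitionOf n p.2 ∧ ∀ u ∈ p.2, ∀ x ∈ u, p.1 x ∈ u} =
      ∑ l ∈ Finset.range (n + 1), stirlingFirst n l * bell l := by
  classical
  rw [natCard_prod_fst_sum (fun (σ : Equiv.Perm (Fin n)) (U : Finset (Finset (Fin n))) =>
      IsPartitionOf n U ∧ ∀ u ∈ U, ∀ x ∈ u, σ x ∈ u)]
  have h1 : ∀ σ : Equiv.Perm (Fin n),
      Nat.card {U : Finset (Finset (Fin n)) //
        IsPartitionOf n U ∧ ∀ u ∈ U, ∀ x ∈ u, σ x ∈ u} = bell (cycleCount σ) :=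
    natCard_satPart
  calc ∑ σ : Equiv.Perm (Fin n), Nat.card {U : Finset (Finset (Fin n)) //
        IsPartitionOf n U ∧ ∀ u ∈ U, ∀ x ∈ u, σ x ∈ u}
      = ∑ σ : Equiv.Perm (Fin n), bell (cycleCount σ) :=
        Finset.sum_congr rfl (fun σ _ => h1 σ)
    _ = ∑ l ∈ Finset.range (n + 1),
          ∑ σ ∈ Finset.univ.filter (fun σ : Equiv.Perm (Fin n) => cycleCount σ = l),
            bell (cycleCount σ) :=
        (Finset.sum_fiberwise_of_maps_to (fun σ _ => Finset.mem_range.mpr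
          (Nat.lt_succ_of_le (cycleCount_le σ))) _).symm
    _ = ∑ l ∈ Finset.range (n + 1), stirlingFirst n l * bell l := by
        refine Finset.sum_congr rfl (fun l _ => ?_)
        have h2 : ∑ σ ∈ Finset.univ.filter (fun σ : Equiv.Perm (Fin n) => cycleCount σ = l),
            bell (cycleCount σ) = ∑ σ ∈ Finset.univ.filter
            (fun σ : Equiv.Perm (Fin n) => cycleCount σ = l), bell l :=
          Finset.sum_congr rfl (fun σ hσ => by rw [(Finset.mem_filter.mp hσ).2])
        rw [h2, Finset.sum_const, smul_eq_mul]
        congr 1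
        rw [stirlingFirst, ncard_setOf_eq_natCard, Nat.card_eq_fintype_card,
          Fintype.card_subtype]

end Assembly

section Assembly2
open Finset
open scoped Classical

variable {n : ℕ}

lemma natCard_ollFiber' (k : ℕ) (U : Finset (Finset (Fin n))) :
    Nat.card {f : Fin k → List (Fin n) // OLLP n k f ∧
        Finset.univ.image (fun j => (f j).toFinset) = U} =
      if IsPartitionOf n U ∧ U.card = k then k.factorial * Wgt U else 0 := by
  by_cases h : IsPartitionOf n U ∧ U.card = k
  · obtain ⟨hU, hk⟩ := h
    rw [if_pos ⟨hU, hk⟩, Nat.card_congr (ollFiberEquiv hU hk), Nat.card_prod]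
    congr 1
    · rw [Nat.card_eq_fintype_card,
        Fintype.card_equiv ((U.equivFin.trans (finCongr hk)).symm)]
      simp
    · rw [Nat.card_pi]
      unfold Wgt
      rw [← Finset.prod_coe_sort U (fun u => (u.card).factorial)]
      exact Finset.prod_congr rfl (fun u _ => natCard_fullL u.1)
  · rw [if_neg h]
    have : IsEmpty {f : Fin k → List (Fin n) // OLLP n k f ∧
        Finset.univ.image (fun j => (f j).toFinset) = U} := by
      constructor
      rintro ⟨f, hf, himg⟩
      exact h ⟨himg ▸ oll_image_part hf, himg ▸ oll_image_card hf⟩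
    exact Nat.card_of_isEmpty

instance ollFiber_finite (k : ℕ) (U : Finset (Finset (Fin n))) :
    Finite {f : Fin k → List (Fin n) // OLLP n k f ∧
        Finset.univ.image (fun j => (f j).toFinset) = U} := by
  by_cases h : IsPartitionOf n U ∧ U.card = k
  · exact Finite.of_equiv _ (ollFiberEquiv h.1 h.2).symm
  · have : IsEmpty {f : Fin k → List (Fin n) // OLLP n k f ∧
        Finset.univ.image (fun j => (f j).toFinset) = U} := by
      constructor
      rintro ⟨f, hf, himg⟩
      exact h ⟨himg ▸ oll_image_part hf, himg ▸ oll_image_card hf⟩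
    exact @Finite.of_fintype _ (@Fintype.ofIsEmpty _ this)

lemma ollFull_fiber_count (k : ℕ) :
    Nat.card {f : Fin k → List (Fin n) // OLLP n k f} =
      ∑ U : Finset (Finset (Fin n)),
        if IsPartitionOf n U ∧ U.card = k then k.factorial * Wgt U else 0 := by
  have hfib : ∀ U : Finset (Finset (Fin n)),
      {x : {f : Fin k → List (Fin n) // OLLP n k f} //
          Finset.univ.image (fun j => (x.1 j).toFinset) = U} ≃
        {f : Fin k → List (Fin n) // OLLP n k f ∧
          Finset.univ.image (fun j => (f j).toFinset) = U} :=
    fun U => Equiv.subtypeSubtypeEquivSubtypeInter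
      (fun f : Fin k → List (Fin n) => OLLP n k f)
      (fun f => Finset.univ.image (fun j => (f j).toFinset) = U)
  rw [natCard_fiber_sum (fun x : {f : Fin k → List (Fin n) // OLLP n k f} =>
      Finset.univ.image (fun j => (x.1 j).toFinset))
    (fun U => Finite.of_equiv _ (hfib U).symm)]
  exact Finset.sum_congr rfl (fun U _ => by rw [Nat.card_congr (hfib U), natCard_ollFiber' k U])

lemma ollFull_count (k : ℕ) (hk1 : 1 ≤ k) (hkn : k ≤ n) :
    Nat.card {f : Fin k → List (Fin n) // OLLP n k f} =
      n.factorial * (n - 1).choose (k - 1) := by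
  rw [Nat.card_congr (ollJoinEquiv n k), Nat.card_prod, natCard_fullL, natCard_posComp k n hk1 hkn]
  congr 2
  simp

lemma lah_sum (k : ℕ) (hk1 : 1 ≤ k) (hkn : k ≤ n) :
    ∑ U ∈ Finset.univ.filter
        (fun U : Finset (Finset (Fin n)) => IsPartitionOf n U ∧ U.card = k), Wgt U =
      n.factorial / k.factorial * (n - 1).choose (k - 1) := by
  have h1 : k.factorial * (∑ U ∈ Finset.univ.filter
      (fun U : Finset (Finset (Fin n)) => IsPartitionOf n U ∧ U.card = k), Wgt U) =
      n.factorial * (n - 1).choose (k - 1) := by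
    rw [Finset.mul_sum, ← ollFull_count (n := n) k hk1 hkn, ollFull_fiber_count k,
      ← Finset.sum_filter]
  obtain ⟨m, hm⟩ := Nat.factorial_dvd_factorial hkn
  have hdiv : n.factorial / k.factorial = m := by
    rw [hm, Nat.mul_div_cancel_left _ (Nat.factorial_pos k)]
  rw [hdiv]
  apply Nat.eq_of_mul_eq_mul_left (Nat.factorial_pos k)
  rw [h1, hm, mul_assoc]

lemma pairs_total_eq_wgt_sum :
    Nat.card {p : Equiv.Perm (Fin n) × Finset (Finset (Fin n)) //
        IsPartitionOf n p.2 ∧ ∀ u ∈ p.2, ∀ x ∈ u, p.1 x ∈ u} =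
      ∑ U ∈ Finset.univ.filter (fun U : Finset (Finset (Fin n)) => IsPartitionOf n U),
        Wgt U := by
  rw [natCard_prod_snd_sum (fun (σ : Equiv.Perm (Fin n)) (U : Finset (Finset (Fin n))) =>
      IsPartitionOf n U ∧ ∀ u ∈ U, ∀ x ∈ u, σ x ∈ u), Finset.sum_filter]
  exact Finset.sum_congr rfl (fun U _ => natCard_pairFiber U)

/-- For `n ≥ 1`, the total number of unordered partitions of `[n]`
into nonempty lists equals `∑_{l=0}^{n} c(n,l) B_l`; equivalently
`∑_{k=1}^{n} (n!/k!) C(n-1,k-1) = ∑_{l=0}^{n} c(n,l) B_l`. -/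
theorem total_set_of_lists_count (n : ℕ) (hn : 1 ≤ n) :
    Set.ncard {P : Finset (List (Fin n)) | IsSetOfLists n P} =
        ∑ l ∈ Finset.range (n + 1), stirlingFirst n l * bell l ∧
      ∑ k ∈ Finset.Icc 1 n, Nat.factorial n / Nat.factorial k * Nat.choose (n - 1) (k - 1) =
        ∑ l ∈ Finset.range (n + 1), stirlingFirst n l * bell l := by
  constructor
  · rw [ncard_setOf_eq_natCard, sol_total_eq_pairs, pairs_eq_stirling_bell]
  · rw [← pairs_eq_stirling_bell, pairs_total_eq_wgt_sum]
    rw [← Finset.sum_fiberwise_of_maps_to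
      (fun U hU => part_card_mem_Icc hn (Finset.mem_filter.mp hU).2) Wgt]
    refine Finset.sum_congr rfl (fun k hk => ?_)
    obtain ⟨hk1, hkn⟩ := Finset.mem_Icc.mp hk
    rw [Finset.filter_filter, ← lah_sum k hk1 hkn]
  
end Assembly2
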